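/- For any positive semidefinite σ and any Hermitian H with support contained in the support of σ, one has ‖H‖₁ ≤ ‖H‖_{B,σ} · √(Tr σ), where ‖H‖_{B,σ} = √(Tr H J_σ⁻¹(H)) is the Bures (semi)norm. -/

import Mathlib

open Matrix
open scoped ComplexOrder

/-- The Schatten 1-norm (trace norm) of a complex matrix: `Tr √(XᴴX)`. -/
noncomputable def traceNorm {n : Type*} [Fintype n] [DecidableEq n] (X : Matrix n n ℂ) : ℝ :=
  (((Matrix.posSemidef_conjTranspose_mul_self X).1.eigenvectorUnitary : Matrix n n ℂ) *
    diagonal (((↑) : ℝ → ℂ) ∘ (√·) ∘ (Matrix.posSemidef_conjTranspose_mul_self X).1.eigenvalues) *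
    (star (Matrix.posSemidef_conjTranspose_mul_self X).1.eigenvectorUnitary : Matrix n n ℂ)).trace.re

noncomputable def toE {n : Type*} [Fintype n] (X : Matrix n n ℂ) : EuclideanSpace ℂ (n × n) :=
  (WithLp.equiv 2 _).symm (fun p => X p.1 p.2)

lemma trace_eq_inner {n : Type*} [Fintype n] [DecidableEq n] (X Y : Matrix n n ℂ) :
    (Xᴴ * Y).trace = inner ℂ (toE X) (toE Y) := by
  simp only [toE, PiLp.inner_apply, RCLike.inner_apply, trace, diag, mul_apply,
    conjTranspose_apply, Fintype.sum_prod_type, WithLp.equiv_symm_apply]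
  rw [Finset.sum_comm]
  exact Finset.sum_congr rfl fun _ _ => Finset.sum_congr rfl fun _ _ => mul_comm _ _

lemma trace_cs {n : Type*} [Fintype n] [DecidableEq n] (A B : Matrix n n ℂ) :
    ‖(Aᴴ * B).trace‖ ≤ Real.sqrt ((Aᴴ * A).trace.re) * Real.sqrt ((Bᴴ * B).trace.re) := by
  have hv : (Aᴴ * A).trace.re = ‖toE A‖ ^ 2 := by
    rw [trace_eq_inner A A]; exact inner_self_eq_norm_sq (𝕜 := ℂ) (toE A)
  have hw : (Bᴴ * B).trace.re = ‖toE B‖ ^ 2 := by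
    rw [trace_eq_inner B B]; exact inner_self_eq_norm_sq (𝕜 := ℂ) (toE B)
  rw [trace_eq_inner A B, hv, hw, Real.sqrt_sq (norm_nonneg _), Real.sqrt_sq (norm_nonneg _)]
  exact norm_inner_le_norm (𝕜 := ℂ) _ _

/-- For positive semidefinite `σ` and Hermitian `H` supported on `supp σ`,
`‖H‖₁ ≤ ‖H‖_{B,σ} √(Tr σ)`, where the Bures (semi)norm is expressed through any Hermitian
witness `Z` of the membership of `H` in the range of `J_σ`, i.e. `(σZ + Zσ)/2 = H`,
so that `‖H‖_{B,σ}² = Tr (H J_σ⁻¹(H)) = Tr (H Z)`. -/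
theorem traceNorm_le_buresNorm_mul_sqrt_trace
    {n : Type*} [Fintype n] [DecidableEq n] (σ H : Matrix n n ℂ)
    (hσ : σ.PosSemidef) (hH : H.IsHermitian)
    (hsupp : ∀ v : n → ℂ, σ *ᵥ v = 0 → H *ᵥ v = 0)
    (Z : Matrix n n ℂ) (hZ : Z.IsHermitian) (hJZ : σ * Z + Z * σ = (2 : ℂ) • H) :
    traceNorm H ≤ Real.sqrt (((H * Z).trace).re) * Real.sqrt ((σ.trace).re) := by
  classical
  set V : Matrix n n ℂ := (hH.eigenvectorUnitary : Matrix n n ℂ) with hVdef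
  set lam : n → ℝ := hH.eigenvalues with hlam
  have hV1 : Vᴴ * V = 1 := by
    rw [← star_eq_conjTranspose]
    exact mem_unitaryGroup_iff'.mp hH.eigenvectorUnitary.2
  have hV2 : V * Vᴴ = 1 := by
    rw [← star_eq_conjTranspose]
    exact mem_unitaryGroup_iff.mp hH.eigenvectorUnitary.2
  have hspec : H = V * diagonal (RCLike.ofReal ∘ lam) * Vᴴ := by
    rw [← star_eq_conjTranspose]
    exact hH.spectral_theorem
  have hmul : ∀ a b : n → ℂ, (V * diagonal a * Vᴴ) * (V * diagonal b * Vᴴ)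
      = V * diagonal (a * b) * Vᴴ := by
    intro a b
    calc (V * diagonal a * Vᴴ) * (V * diagonal b * Vᴴ)
        = V * diagonal a * (Vᴴ * V) * diagonal b * Vᴴ := by
          simp only [Matrix.mul_assoc]
      _ = V * diagonal (a * b) * Vᴴ := by
          rw [hV1, Matrix.mul_one, Matrix.mul_assoc V, diagonal_mul_diagonal]; rfl
  set u : n → ℂ := fun i => if lam i < 0 then -1 else 1 with hu
  set U : Matrix n n ℂ := V * diagonal u * Vᴴ with hUdef
  have hstaru : star u = u := by
    funext i
    simp only [Pi.star_apply, hu]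
    split <;> simp
  have hUherm : Uᴴ = U := by
    rw [hUdef, conjTranspose_mul, conjTranspose_mul, conjTranspose_conjTranspose,
      diagonal_conjTranspose, hstaru, ← Matrix.mul_assoc]
  have hU2 : U * U = 1 := by
    rw [hUdef, hmul]
    have huu : u * u = fun _ => 1 := by
      funext i
      simp only [Pi.mul_apply, hu]
      split <;> ring
    rw [huu, diagonal_one, Matrix.mul_one, hV2]
  set a : n → ℂ := fun i => ((|lam i| : ℝ) : ℂ) with ha
  set S : Matrix n n ℂ := V * diagonal a * Vᴴ with hSdef
  have hua : u * (RCLike.ofReal ∘ lam) = a := by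
    funext i
    simp only [Pi.mul_apply, Function.comp_apply, hu, ha]
    split_ifs with h
    · rw [abs_of_neg h]
      show (-1 : ℂ) * ((lam i : ℝ) : ℂ) = ((-(lam i) : ℝ) : ℂ)
      push_cast; ring
    · rw [abs_of_nonneg (not_lt.mp h)]
      show (1 : ℂ) * ((lam i : ℝ) : ℂ) = ((lam i : ℝ) : ℂ)
      rw [one_mul]
  have hUH : U * H = S := by
    conv_lhs => rw [hUdef, hspec]
    rw [hmul, hua, hSdef]
  have hSpsd : S.PosSemidef := by
    rw [hSdef]
    refine PosSemidef.mul_mul_conjTranspose_same ?_ V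
    refine posSemidef_diagonal_iff.mpr fun i => ?_
    show (0 : ℂ) ≤ ((|lam i| : ℝ) : ℂ)
    exact Complex.zero_le_real.mpr (abs_nonneg _)
  have haa : a * a = (RCLike.ofReal ∘ lam) * (RCLike.ofReal ∘ lam) := by
    funext i
    show ((|lam i| : ℝ) : ℂ) * ((|lam i| : ℝ) : ℂ) = ((lam i : ℝ) : ℂ) * ((lam i : ℝ) : ℂ)
    exact_mod_cast congrArg Complex.ofReal (abs_mul_abs_self (lam i))
  have hSsq : S ^ 2 = Hᴴ * H := by
    rw [hH.eq, sq, hSdef, hmul, haa]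
    conv_rhs => rw [hspec]
    rw [hmul]
  have htn : traceNorm H = S.trace.re := by
    open MatrixOrder in
    have hc : cfc Real.sqrt (Hᴴ * H) = S := by
      rw [← cfcₙ_eq_cfc (hf0 := Real.sqrt_zero), ← CFC.sqrt_eq_real_sqrt (Hᴴ * H) (posSemidef_conjTranspose_mul_self H).nonneg]
      exact CFC.sqrt_unique (by rw [← sq]; exact hSsq) hSpsd.nonneg
    rw [traceNorm, ← hc, (posSemidef_conjTranspose_mul_self H).1.cfc_eq, IsHermitian.cfc,
      Unitary.conjStarAlgAut_apply]
    rfl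
  set t : ℂ := (U * σ * Z).trace with ht
  have h2t : (2 : ℂ) * (U * H).trace = t + (U * Z * σ).trace := by
    have h := congrArg (fun M => (U * M).trace) hJZ
    simp only [Matrix.mul_add, Matrix.mul_smul, trace_add, trace_smul, smul_eq_mul,
      ← Matrix.mul_assoc] at h
    exact h.symm
  have hconj : (U * Z * σ).trace = star t := by
    rw [ht, ← trace_conjTranspose, conjTranspose_mul, conjTranspose_mul, hZ.eq, hσ.1.eq,
      hUherm, ← Matrix.mul_assoc]
    exact (Matrix.trace_mul_cycle Z σ U).symm
  have hre : (U * H).trace = ((t.re : ℝ) : ℂ) := by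
    apply mul_left_cancel₀ (two_ne_zero (α := ℂ))
    rw [h2t, hconj, RCLike.star_def, Complex.add_conj]
    push_cast
    ring
  open MatrixOrder in
  set sq2 : Matrix n n ℂ := CFC.sqrt σ with hsq2
  open MatrixOrder in
  have hsqh : sq2ᴴ = sq2 := (CFC.sqrt_nonneg σ).posSemidef.1
  open MatrixOrder in
  have hsqsq : sq2 * sq2 = σ := CFC.sqrt_mul_sqrt_self σ hσ.nonneg
  have hAB : (sq2 * U)ᴴ * (sq2 * Z) = U * σ * Z := by
    rw [conjTranspose_mul, hsqh, hUherm, Matrix.mul_assoc, ← Matrix.mul_assoc sq2, hsqsq,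
      ← Matrix.mul_assoc]
  have hAA : ((sq2 * U)ᴴ * (sq2 * U)).trace = σ.trace := by
    have h : (sq2 * U)ᴴ * (sq2 * U) = U * σ * U := by
      rw [conjTranspose_mul, hsqh, hUherm, Matrix.mul_assoc, ← Matrix.mul_assoc sq2, hsqsq,
        ← Matrix.mul_assoc]
    rw [h, trace_mul_comm (U * σ) U, ← Matrix.mul_assoc, hU2, Matrix.one_mul]
  have hBB : ((sq2 * Z)ᴴ * (sq2 * Z)).trace = (H * Z).trace := by
    have h1 : (sq2 * Z)ᴴ * (sq2 * Z) = Z * σ * Z := by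
      rw [conjTranspose_mul, hsqh, hZ.eq, Matrix.mul_assoc, ← Matrix.mul_assoc sq2, hsqsq,
        ← Matrix.mul_assoc]
    have h2 := congrArg (fun M => (M * Z).trace) hJZ
    simp only [Matrix.add_mul, Matrix.smul_mul, trace_add, trace_smul, smul_eq_mul] at h2
    rw [Matrix.trace_mul_cycle σ Z Z] at h2
    rw [h1]
    apply mul_left_cancel₀ (two_ne_zero (α := ℂ))
    rw [← h2]; ring
  have hcs := trace_cs (sq2 * U) (sq2 * Z)
  rw [hAB, hAA, hBB] at hcs
  have hfin : t.re ≤ Real.sqrt (σ.trace.re) * Real.sqrt ((H * Z).trace.re) :=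
    le_trans (Complex.re_le_norm t) (by rw [ht]; exact hcs)
  rw [htn, ← hUH, hre, Complex.ofReal_re, mul_comm]
  exact hfin
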